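/- Let 𝒮 = { m : ℕ → ℤ | 0 ≤ m 0 ∧ ∀ j ≥ 1, 0 ≤ m 0 + 2 * m j }. Then: (a) 𝒮 is a submonoid of the additive monoid ℕ → ℤ with pointwise addition; (b) 𝒮 is closed in the product topology on ℕ → ℤ (ℤ discrete); and (c) for every i ≥ 1, the image of 𝒮 under the projection π_i to the first i coordinates equals S_i = { m : Fin i → ℤ | 0 ≤ m 0 ∧ ∀ j ≠ 0, 0 ≤ m 0 + 2 * m j }, and S_i is a finitely generated submonoid of Fin i → ℤ. In particular 𝒮 is a pro-affine semigroup. -/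

import Mathlib

/-- Projection of `ℤ^ω = ℕ → ℤ` onto the first `i` coordinates. -/
def projZ (i : ℕ) : (ℕ → ℤ) →+ (Fin i → ℤ) where
  toFun m := fun k => m k.1
  map_zero' := rfl
  map_add' _ _ := rfl

/-- Generator `e_j`. -/
def egen (i : ℕ) (j : Fin i) : Fin i → ℤ := Pi.single j 1

/-- Generator `2e₀ - Σ_{j∈A} e_j`. -/
def ggen (i : ℕ) (hi : 0 < i) (A : Finset (Fin i)) : Fin i → ℤ :=
  fun k => if k = ⟨0, hi⟩ then 2 else if k ∈ A then -1 else 0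

noncomputable def Gset (i : ℕ) (hi : 0 < i) : Finset (Fin i → ℤ) :=
  (Finset.univ.image (egen i)) ∪ (Finset.univ.image (ggen i hi))

theorem egen_mem_closure (i : ℕ) (hi : 0 < i) (j : Fin i) :
    egen i j ∈ AddSubmonoid.closure ((Gset i hi : Set (Fin i → ℤ))) := by
  apply AddSubmonoid.subset_closure
  rw [Finset.mem_coe, Gset, Finset.mem_union]
  exact Or.inl (Finset.mem_image_of_mem _ (Finset.mem_univ j))

theorem ggen_mem_closure (i : ℕ) (hi : 0 < i) (A : Finset (Fin i)) :
    ggen i hi A ∈ AddSubmonoid.closure ((Gset i hi : Set (Fin i → ℤ))) := by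
  apply AddSubmonoid.subset_closure
  rw [Finset.mem_coe, Gset, Finset.mem_union]
  exact Or.inr (Finset.mem_image_of_mem _ (Finset.mem_univ A))

theorem keygen (i : ℕ) (hi : 0 < i) (n : ℕ) :
    ∀ m : Fin i → ℤ, m ⟨0, hi⟩ = (n : ℤ) →
      (∀ j, j ≠ ⟨0, hi⟩ → 0 ≤ m ⟨0, hi⟩ + 2 * m j) →
      m ∈ AddSubmonoid.closure ((Gset i hi : Set (Fin i → ℤ))) := by
  induction n using Nat.strong_induction_on with
  | _ n IH =>
    intro m hm0 hm
    set z : Fin i := ⟨0, hi⟩ with hz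
    rcases n with _ | _ | n
    · -- n = 0 : all coordinates nonneg
      have hnn : ∀ j, 0 ≤ m j := by
        intro j
        by_cases h : j = z
        · rw [h, hm0]; norm_num
        · have := hm j h; omega
      have hrep : m = ∑ j : Fin i, (m j).toNat • egen i j := by
        ext k
        rw [Finset.sum_apply]
        simp only [egen, Pi.smul_apply, smul_eq_mul, Pi.single_apply]
        rw [Finset.sum_eq_single k]
        · simp [Int.toNat_of_nonneg (hnn k)]
        · intro b _ hb
          simp [Ne.symm hb]
        · simp
      rw [hrep]
      exact AddSubmonoid.sum_mem _ fun j _ =>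
        nsmul_mem (egen_mem_closure i hi j) _
    · -- n = 1 : subtract e₀
      have h1 : m z = 1 := by exact_mod_cast hm0
      have key : (m - egen i z) ∈ AddSubmonoid.closure ((Gset i hi : Set (Fin i → ℤ))) := by
        refine IH 0 (by omega) _ ?_ ?_
        · simp [egen, h1, Pi.single_eq_same]
        · intro j hj
          have h2 := hm j hj
          have e1 : egen i z z = 1 := Pi.single_eq_same z 1
          have e2 : egen i z j = 0 := Pi.single_eq_of_ne hj 1
          simp only [Pi.sub_apply, e1, e2, h1] at *
          omega
      have : m = (m - egen i z) + egen i z := by ring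
      rw [this]
      exact AddSubmonoid.add_mem _ key (egen_mem_closure i hi z)
    · -- n + 2 : subtract ggen A
      classical
      set A : Finset (Fin i) := Finset.univ.filter (fun j => j ≠ z ∧ m z + 2 * m j < 2) with hA
      have hAz : z ∉ A := by simp [hA]
      have key : (m - ggen i hi A) ∈ AddSubmonoid.closure ((Gset i hi : Set (Fin i → ℤ))) := by
        refine IH n (by omega) _ ?_ ?_
        · have : ggen i hi A z = 2 := by simp [ggen, ← hz]
          simp only [Pi.sub_apply, this, hm0]
          push_cast; ring
        · intro j hj
          have hgz : ggen i hi A z = 2 := by simp [ggen, ← hz]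
          have h2 := hm j hj
          by_cases hjA : j ∈ A
          · have : ggen i hi A j = -1 := by simp [ggen, ← hz, hj, hjA]
            simp only [Pi.sub_apply, hgz, this]
            omega
          · have hge : 2 ≤ m z + 2 * m j := by
              by_contra hc
              exact hjA (by simp [hA, hj]; omega)
            have : ggen i hi A j = 0 := by simp [ggen, ← hz, hj, hjA]
            simp only [Pi.sub_apply, hgz, this]
            omega
      have : m = (m - ggen i hi A) + ggen i hi A := by ring
      rw [this]
      exact AddSubmonoid.add_mem _ key (ggen_mem_closure i hi A)


/-- The semigroup `𝒮 = {m ∈ ℤ^ω | m₀ ≥ 0 and m₀ + 2mⱼ ≥ 0 for all j ≥ 1}` of the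
affine toric ind-variety `{y² = x₁⋯xᵢ}` is a pro-affine semigroup: it is a
submonoid of `ℤ^ω`, closed in the product topology, and its projection to the
first `i` coordinates equals the finitely generated semigroup
`Sᵢ = {m ∈ ℤ^i | m₀ ≥ 0 and m₀ + 2mⱼ ≥ 0 for all j ≠ 0}`. -/
theorem example_toric_ind_semigroup_proaffine :
    ((0 : ℕ → ℤ) ∈ {m : ℕ → ℤ | 0 ≤ m 0 ∧ ∀ j, 1 ≤ j → 0 ≤ m 0 + 2 * m j} ∧
      ∀ a ∈ {m : ℕ → ℤ | 0 ≤ m 0 ∧ ∀ j, 1 ≤ j → 0 ≤ m 0 + 2 * m j},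
        ∀ b ∈ {m : ℕ → ℤ | 0 ≤ m 0 ∧ ∀ j, 1 ≤ j → 0 ≤ m 0 + 2 * m j},
          a + b ∈ {m : ℕ → ℤ | 0 ≤ m 0 ∧ ∀ j, 1 ≤ j → 0 ≤ m 0 + 2 * m j}) ∧
    IsClosed {m : ℕ → ℤ | 0 ≤ m 0 ∧ ∀ j, 1 ≤ j → 0 ≤ m 0 + 2 * m j} ∧
    ∀ i : ℕ, ∀ hi : 0 < i,
      projZ i '' {m : ℕ → ℤ | 0 ≤ m 0 ∧ ∀ j, 1 ≤ j → 0 ≤ m 0 + 2 * m j} =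
          {m : Fin i → ℤ | 0 ≤ m ⟨0, hi⟩ ∧
            ∀ j : Fin i, j ≠ ⟨0, hi⟩ → 0 ≤ m ⟨0, hi⟩ + 2 * m j} ∧
        ∃ T : AddSubmonoid (Fin i → ℤ),
          (T : Set (Fin i → ℤ)) =
              {m : Fin i → ℤ | 0 ≤ m ⟨0, hi⟩ ∧
                ∀ j : Fin i, j ≠ ⟨0, hi⟩ → 0 ≤ m ⟨0, hi⟩ + 2 * m j} ∧
            T.FG := by
  refine ⟨⟨⟨le_refl 0, fun j _ => ?_⟩, ?_⟩, ?_, ?_⟩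
  · simp
  · rintro a ⟨ha0, ha⟩ b ⟨hb0, hb⟩
    refine ⟨add_nonneg ha0 hb0, fun j hj => ?_⟩
    have := ha j hj; have := hb j hj
    simp only [Pi.add_apply]
    omega
  · have heq : {m : ℕ → ℤ | 0 ≤ m 0 ∧ ∀ j, 1 ≤ j → 0 ≤ m 0 + 2 * m j}
        = {m : ℕ → ℤ | 0 ≤ m 0} ∩
          ⋂ j : ℕ, ⋂ _ : 1 ≤ j, {m : ℕ → ℤ | 0 ≤ m 0 + (m j + m j)} := by
      ext m
      simp only [Set.mem_inter_iff, Set.mem_iInter, Set.mem_setOf_eq]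
      constructor
      · rintro ⟨h0, h⟩; exact ⟨h0, fun j hj => by have := h j hj; omega⟩
      · rintro ⟨h0, h⟩; exact ⟨h0, fun j hj => by have := h j hj; omega⟩
    rw [heq]
    refine IsClosed.inter ?_ (isClosed_iInter fun j => isClosed_iInter fun _ => ?_)
    · show IsClosed ((fun m : ℕ → ℤ => m 0) ⁻¹' {x : ℤ | 0 ≤ x})
      exact IsClosed.preimage (continuous_apply 0) (isClosed_discrete {x : ℤ | 0 ≤ x})
    · show IsClosed ((fun m : ℕ → ℤ => m 0 + (m j + m j)) ⁻¹' {x : ℤ | 0 ≤ x})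
      exact IsClosed.preimage ((continuous_apply 0).add
        ((continuous_apply j).add (continuous_apply j))) (isClosed_discrete {x : ℤ | 0 ≤ x})
  · intro i hi
    constructor
    · ext m'
      constructor
      · rintro ⟨m, ⟨h0, hj⟩, rfl⟩
        refine ⟨h0, fun j hjz => ?_⟩
        have h1 : 1 ≤ j.1 := by
          rcases Nat.eq_zero_or_pos j.1 with h | h
          · exact absurd (Fin.ext h) hjz
          · exact h
        exact hj j.1 h1
      · rintro ⟨h0, hj⟩
        refine ⟨fun n => if h : n < i then m' ⟨n, h⟩ else 0, ⟨?_, ?_⟩, ?_⟩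
        · simpa [hi] using h0
        · intro j hj1
          by_cases h : j < i
          · have hne : (⟨j, h⟩ : Fin i) ≠ ⟨0, hi⟩ := by
              simp only [ne_eq, Fin.mk.injEq]; omega
            have := hj ⟨j, h⟩ hne
            simpa [hi, h] using this
          · simpa [hi, h] using h0
        · funext k
          simp [projZ, k.2]
    · refine ⟨⟨⟨{m : Fin i → ℤ | 0 ≤ m ⟨0, hi⟩ ∧
          ∀ j : Fin i, j ≠ ⟨0, hi⟩ → 0 ≤ m ⟨0, hi⟩ + 2 * m j}, ?_⟩, ?_⟩, rfl, ?_⟩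
      · intro a b ha hb
        obtain ⟨ha0, ha2⟩ := ha
        obtain ⟨hb0, hb2⟩ := hb
        refine ⟨add_nonneg ha0 hb0, fun j hj => ?_⟩
        have := ha2 j hj; have := hb2 j hj
        simp only [Pi.add_apply]
        omega
      · exact ⟨le_refl 0, fun j _ => by simp⟩
      · refine ⟨Gset i hi, le_antisymm (AddSubmonoid.closure_le.2 ?_) ?_⟩
        · intro x hx
          rw [Finset.mem_coe, Gset, Finset.mem_union] at hx
          rcases hx with hx | hx
          · obtain ⟨j, -, rfl⟩ := Finset.mem_image.1 hx
            have hnn : ∀ k, 0 ≤ egen i j k := by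
              intro k
              simp only [egen, Pi.single_apply]
              split <;> norm_num
            exact ⟨hnn _, fun k _ => by have := hnn ⟨0, hi⟩; have := hnn k; omega⟩
          · obtain ⟨A, -, rfl⟩ := Finset.mem_image.1 hx
            have hz : ggen i hi A ⟨0, hi⟩ = 2 := by simp [ggen]
            refine ⟨by rw [hz]; norm_num, fun k hk => ?_⟩
            have hk' : ggen i hi A k = if k ∈ A then -1 else 0 := by simp [ggen, hk]
            rw [hz, hk']
            split <;> norm_num
        · rintro m ⟨h0, hj⟩
          exact keygen i hi (m ⟨0, hi⟩).toNat m (Int.toNat_of_nonneg h0).symm hj
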